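/- For every x* ∈ zer(A + C) and every n ≥ 1, the iterates of the forward–backward algorithm with deviations satisfy ‖x_{n+1} − x*‖_M² + ℓ_n² ≤ ‖x_n − x*‖_M² + ζ_{n−1}·ℓ_{n−1}². -/

import Mathlib

open Filter
open scoped RealInnerProductSpace Pointwise Topology

/-- The `M`-induced norm `‖w‖_M = √⟪w, M w⟫`. -/
noncomputable def mnorm {H : Type*} [NormedAddCommGroup H] [InnerProductSpace ℝ H]
    (M : H →L[ℝ] H) (w : H) : ℝ :=
  Real.sqrt ⟪w, M w⟫

private lemma expandB {H : Type*} [NormedAddCommGroup H] [InnerProductSpace ℝ H]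
    (M : H →L[ℝ] H) (hMsa : ∀ a b : H, ⟪M a, b⟫ = ⟪a, M b⟫)
    (E a U V : H) (b1 b2 b3 b4 c1 c2 c3 c4 : ℝ) :
    ⟪b1•E + b2•a + b3•U + b4•V, M (c1•E + c2•a + c3•U + c4•V)⟫ =
      b1*c1*⟪E, M E⟫ + b2*c2*⟪a, M a⟫ + b3*c3*⟪U, M U⟫ + b4*c4*⟪V, M V⟫
      + (b1*c2 + b2*c1)*⟪E, M a⟫ + (b1*c3 + b3*c1)*⟪E, M U⟫ + (b1*c4 + b4*c1)*⟪E, M V⟫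
      + (b2*c3 + b3*c2)*⟪a, M U⟫ + (b2*c4 + b4*c2)*⟪a, M V⟫ + (b3*c4 + b4*c3)*⟪U, M V⟫ := by
  have sym : ∀ w w' : H, ⟪w, M w'⟫ = ⟪w', M w⟫ := fun w w' => by
    rw [← hMsa]; exact real_inner_comm _ _
  simp only [map_add, map_smul, inner_add_left, inner_add_right,
    real_inner_smul_left, real_inner_smul_right]
  linear_combination (b2*c1)*(sym a E) + (b3*c1)*(sym U E) + (b4*c1)*(sym V E)
    + (b3*c2)*(sym U a) + (b4*c2)*(sym V a) + (b4*c3)*(sym V U)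



private lemma scalar_iden (l g β q1 q2 q3 q4 q5 q6 q7 q8 q9 q10 : ℝ)
    (hd1 : (2 - l*g*β) ≠ 0) (hd2 : (4 - 2*l - g*β) ≠ 0) :
    (1*1*q1 + l*l*q2 + (-(l*((1-l)*g*β/(2-l*g*β))))*(-(l*((1-l)*g*β/(2-l*g*β))))*q3
      + (-l)*(-l)*q4 + (1*l + l*1)*q5
      + (1*(-(l*((1-l)*g*β/(2-l*g*β)))) + (-(l*((1-l)*g*β/(2-l*g*β))))*1)*q6
      + (1*(-l) + (-l)*1)*q7
      + (l*(-(l*((1-l)*g*β/(2-l*g*β)))) + (-(l*((1-l)*g*β/(2-l*g*β))))*l)*q8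
      + (l*(-l) + (-l)*l)*q9
      + ((-(l*((1-l)*g*β/(2-l*g*β))))*(-l) + (-l)*(-(l*((1-l)*g*β/(2-l*g*β)))))*q10)
    + (l*(4-2*l-g*β)/2) *
      (0*0*q1 + 1*1*q2 + (l*g*β/(2-l*g*β))*(l*g*β/(2-l*g*β))*q3
        + (-(2*(1-l)/(4-2*l-g*β)))*(-(2*(1-l)/(4-2*l-g*β)))*q4
        + (0*1+1*0)*q5 + (0*(l*g*β/(2-l*g*β)) + (l*g*β/(2-l*g*β))*0)*q6
        + (0*(-(2*(1-l)/(4-2*l-g*β))) + (-(2*(1-l)/(4-2*l-g*β)))*0)*q7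
        + (1*(l*g*β/(2-l*g*β)) + (l*g*β/(2-l*g*β))*1)*q8
        + (1*(-(2*(1-l)/(4-2*l-g*β))) + (-(2*(1-l)/(4-2*l-g*β)))*1)*q9
        + ((l*g*β/(2-l*g*β))*(-(2*(1-l)/(4-2*l-g*β))) + (-(2*(1-l)/(4-2*l-g*β)))*(l*g*β/(2-l*g*β)))*q10)
    + 2*l*((-q2 - q5 + ((1-l)*g*β/(2-l*g*β))*q6 + q7 + ((1-l)*g*β/(2-l*g*β))*q8 + q9)
        + (g*β/4)*(q2 + q3 - 2*q8))
    = q1 + (l*g*β/(2-l*g*β))*q3 + (l*(2-l*g*β)/(4-2*l-g*β))*q4 := by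
  have hd2'' : (4 - l*2 - g*β) ≠ 0 := by rwa [mul_comm 2 l] at hd2
  field_simp
  ring

set_option maxHeartbeats 1000000 in
/-- Lyapunov inequality along the iterates. -/
theorem lyapunov_inequality
    {H : Type*} [NormedAddCommGroup H] [InnerProductSpace ℝ H] [CompleteSpace H]
    (M : H →L[ℝ] H)
    (hMsa : ∀ a b : H, ⟪M a, b⟫ = ⟪a, M b⟫)
    (hMpos : ∃ c > (0:ℝ), ∀ a : H, ⟪a, M a⟫ ≥ c * ‖a‖ ^ 2)
    (Minv : H →L[ℝ] H)
    (hMinv₁ : ∀ a : H, Minv (M a) = a)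
    (hMinv₂ : ∀ a : H, M (Minv a) = a)
    (β : ℝ) (hβ : 0 < β)
    (A : H → Set H)
    (hAmono : ∀ a b ua vb : H, ua ∈ A a → vb ∈ A b → ⟪ua - vb, a - b⟫ ≥ 0)
    (hAmax : ∀ a ua : H, (∀ b vb : H, vb ∈ A b → ⟪ua - vb, a - b⟫ ≥ 0) → ua ∈ A a)
    (C : H → H)
    (hC : ∀ a b : H, ⟪C a - C b, a - b⟫ ≥ (1 / β) * mnorm Minv (C a - C b) ^ 2)
    (hzer : ∃ w : H, -C w ∈ A w)
    (ε : ℝ) (hε0 : 0 < ε) (hε1 : ε < min 1 (4 / (3 + β)))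
    (ζ γ lam : ℕ → ℝ)
    (hζ : ∀ n, 0 ≤ ζ n ∧ ζ n ≤ 1 - ε)
    (hγ : ∀ n, ε ≤ γ n ∧ γ n ≤ (4 - 3 * ε) / β)
    (hlam : ∀ n, ε ≤ lam n ∧ lam n ≤ 2 - γ n * β / 2 - ε / 2)
    (x u v p y z : ℕ → H) (ℓsq : ℕ → ℝ)
    (hu0 : u 0 = 0) (hv0 : v 0 = 0)
    (hy : ∀ n, y n = x n + u n)
    (hz : ∀ n, z n = x n + (((1 - lam n) * γ n * β) / (2 - lam n * γ n * β)) • u n + v n)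
    (hp : ∀ n, M (z n) - M (p n) - γ n • C (y n) ∈ γ n • A (p n))
    (hx : ∀ n, x (n + 1) = x n + lam n • (p n - z n))
    (hℓ : ∀ n, ℓsq n = (lam n * (4 - 2 * lam n - γ n * β) / 2) *
      mnorm M (p n - x n + ((lam n * γ n * β) / (2 - lam n * γ n * β)) • u n
        - ((2 * (1 - lam n)) / (4 - 2 * lam n - γ n * β)) • v n) ^ 2)
    (hdev : ∀ n, (lam (n+1) * γ (n+1) * β / (2 - lam (n+1) * γ (n+1) * β)) * mnorm M (u (n+1)) ^ 2
        + (lam (n+1) * (2 - lam (n+1) * γ (n+1) * β) / (4 - 2 * lam (n+1) - γ (n+1) * β)) * mnorm M (v (n+1)) ^ 2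
        ≤ ζ n * ℓsq n)
    :
    ∀ xs : H, -C xs ∈ A xs → ∀ n : ℕ, 1 ≤ n →
      mnorm M (x (n + 1) - xs) ^ 2 + ℓsq n ≤
        mnorm M (x n - xs) ^ 2 + ζ (n - 1) * ℓsq (n - 1) := by
  -- basic positivity facts
  have hMnn : ∀ w : H, 0 ≤ ⟪w, M w⟫ := by
    intro w
    obtain ⟨c, hc, hq⟩ := hMpos
    exact le_trans (by positivity) (hq w)
  have hMinvnn : ∀ w : H, 0 ≤ ⟪w, Minv w⟫ := by
    intro w
    have h1 : ⟪w, Minv w⟫ = ⟪M (Minv w), Minv w⟫ := by rw [hMinv₂]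
    rw [h1, hMsa]; exact hMnn _
  have mn : ∀ w : H, mnorm M w ^ 2 = ⟪w, M w⟫ := fun w => Real.sq_sqrt (hMnn w)
  intro xs hxs n hn
  obtain ⟨m, rfl⟩ : ∃ m, n = m + 1 := ⟨n - 1, by omega⟩
  simp only [Nat.add_sub_cancel]
  have Hy := hy (m+1); have Hz := hz (m+1); have Hp := hp (m+1); have Hx := hx (m+1)
  have Hl := hℓ (m+1); have Hdev := hdev m
  have Hlam := hlam (m+1); have Hγ := hγ (m+1)
  set l := lam (m+1) with hldef
  set g := γ (m+1) with hgdef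
  set P := p (m+1) with hPdef
  set Z := z (m+1) with hZdef
  set Y := y (m+1) with hYdef
  set U := u (m+1) with hUdef
  set V := v (m+1) with hVdef
  -- numeric bounds
  have hε1a : ε < 1 := lt_of_lt_of_le hε1 (min_le_left _ _)
  have hl0 : 0 < l := lt_of_lt_of_le hε0 Hlam.1
  have hg0 : 0 < g := lt_of_lt_of_le hε0 Hγ.1
  have ht0 : 0 < g * β := mul_pos hg0 hβ
  have hd2 : 0 < 4 - 2*l - g*β := by
    have := Hlam.2; linarith
  have hd1 : 0 < 2 - l*g*β := by
    have hmul : l*(g*β) ≤ (2 - g*β/2 - ε/2)*(g*β) :=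
      mul_le_mul_of_nonneg_right Hlam.2 ht0.le
    nlinarith [sq_nonneg (g*β - 2 + ε/2), mul_pos hε0 (sub_pos.mpr hε1a)]
  have hd1' : (2 - l*g*β) ≠ 0 := hd1.ne'
  have hd2' : (4 - 2*l - g*β) ≠ 0 := hd2.ne'
  -- Step A : key inequality hS
  rw [Set.mem_smul_set] at Hp
  obtain ⟨w, hw, hweq⟩ := Hp
  have hmono := hAmono P xs w (-C xs) hw hxs
  have key : ⟪M Z - M P, P - xs⟫ - g * ⟪C Y - C xs, P - xs⟫
      = g * ⟪w - -C xs, P - xs⟫ := by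
    have hzp2 : M Z - M P = g • w + g • C Y := by rw [hweq]; abel
    rw [hzp2]
    simp only [inner_add_left, inner_sub_left, inner_neg_left, real_inner_smul_left]
    ring
  have hkey2 : g * ⟪C Y - C xs, P - xs⟫ ≤ ⟪M Z - M P, P - xs⟫ := by
    have := mul_nonneg hg0.le hmono
    linarith [key]
  have hQ : mnorm Minv (C Y - C xs) ^ 2 = ⟪C Y - C xs, Minv (C Y - C xs)⟫ :=
    Real.sq_sqrt (hMinvnn _)
  have hCo := hC Y xs
  rw [hQ] at hCo
  have hCo2 : ⟪C Y - C xs, Minv (C Y - C xs)⟫ ≤ β * ⟪C Y - C xs, Y - xs⟫ := by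
    have h := mul_le_mul_of_nonneg_left hCo hβ.le
    calc ⟪C Y - C xs, Minv (C Y - C xs)⟫
        = β * (1 / β * ⟪C Y - C xs, Minv (C Y - C xs)⟫) := by field_simp
      _ ≤ β * ⟪C Y - C xs, Y - xs⟫ := h
  have hYexp : ⟪C Y - C xs + (β/2) • M (P - Y), Minv (C Y - C xs + (β/2) • M (P - Y))⟫
      = ⟪C Y - C xs, Minv (C Y - C xs)⟫ + β * ⟪C Y - C xs, P - Y⟫
        + (β^2/4) * ⟪P - Y, M (P - Y)⟫ := by
    have e1 : ⟪M (P - Y), Minv (C Y - C xs)⟫ = ⟪P - Y, C Y - C xs⟫ := by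
      rw [hMsa, hMinv₂]
    have e2 : ⟪M (P - Y), P - Y⟫ = ⟪P - Y, M (P - Y)⟫ := hMsa _ _
    simp only [map_add, map_smul, inner_add_left, inner_add_right,
      real_inner_smul_left, real_inner_smul_right, hMinv₁]
    rw [e1, e2, real_inner_comm (P - Y) (C Y - C xs)]
    ring
  have hYng : 0 ≤ ⟪C Y - C xs, Minv (C Y - C xs)⟫ + β * ⟪C Y - C xs, P - Y⟫
      + (β^2/4) * ⟪P - Y, M (P - Y)⟫ := by
    rw [← hYexp]; exact hMinvnn _
  have hsplit : ⟪C Y - C xs, P - xs⟫ = ⟪C Y - C xs, Y - xs⟫ + ⟪C Y - C xs, P - Y⟫ := by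
    rw [← inner_add_right]
    congr 1
    abel
  have hfc : 0 ≤ β * ⟪C Y - C xs, P - xs⟫ + (β^2/4) * ⟪P - Y, M (P - Y)⟫ := by
    rw [hsplit]
    nlinarith [hYng, hCo2]
  have h3 : 0 ≤ (g/β) * (β * ⟪C Y - C xs, P - xs⟫ + (β^2/4) * ⟪P - Y, M (P - Y)⟫) :=
    mul_nonneg (div_nonneg hg0.le hβ.le) hfc
  have h4 : (g/β) * (β * ⟪C Y - C xs, P - xs⟫ + (β^2/4) * ⟪P - Y, M (P - Y)⟫)
      = g * ⟪C Y - C xs, P - xs⟫ + (g*β/4) * ⟪P - Y, M (P - Y)⟫ := by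
    field_simp
  have hS : 0 ≤ ⟪M Z - M P, P - xs⟫ + (g*β/4) * ⟪P - Y, M (P - Y)⟫ := by
    rw [h4] at h3
    linarith [hkey2]
  -- Step B : vector decompositions
  have hXc : x (m+1+1) - xs = (1:ℝ)•(x (m+1) - xs) + l•(P - x (m+1))
      + (-(l*(((1 - l) * g * β) / (2 - l * g * β))))•U + (-l)•V := by
    rw [Hx, Hz]; module
  have hw1 : P - x (m+1) + ((l * g * β) / (2 - l * g * β)) • U
      - ((2 * (1 - l)) / (4 - 2 * l - g * β)) • V
      = (0:ℝ)•(x (m+1) - xs) + (1:ℝ)•(P - x (m+1)) + ((l * g * β) / (2 - l * g * β))•U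
        + (-((2 * (1 - l)) / (4 - 2 * l - g * β)))•V := by
    module
  have hzp : Z - P = (0:ℝ)•(x (m+1) - xs) + (-1:ℝ)•(P - x (m+1))
      + (((1 - l) * g * β) / (2 - l * g * β))•U + (1:ℝ)•V := by
    rw [Hz]; module
  have hpxs : P - xs = (1:ℝ)•(x (m+1) - xs) + (1:ℝ)•(P - x (m+1)) + (0:ℝ)•U + (0:ℝ)•V := by
    module
  have hpy : P - Y = (0:ℝ)•(x (m+1) - xs) + (1:ℝ)•(P - x (m+1)) + (-1:ℝ)•U + (0:ℝ)•V := by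
    rw [Hy]; module
  -- the exact algebraic identity
  have iden : ⟪x (m+1+1) - xs, M (x (m+1+1) - xs)⟫ + ℓsq (m+1)
      + 2*l*(⟪M Z - M P, P - xs⟫ + (g*β/4) * ⟪P - Y, M (P - Y)⟫)
      = ⟪x (m+1) - xs, M (x (m+1) - xs)⟫
        + (l * g * β / (2 - l * g * β)) * ⟪U, M U⟫
        + (l * (2 - l * g * β) / (4 - 2 * l - g * β)) * ⟪V, M V⟫ := by
    rw [Hl, mn, show M Z - M P = M (Z - P) from (map_sub M Z P).symm,
      hMsa (Z - P) (P - xs), hXc, hw1, hzp, hpxs, hpy]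
    simp only [expandB M hMsa]
    linarith [scalar_iden l g β
      ⟪x (m+1) - xs, M (x (m+1) - xs)⟫ ⟪P - x (m+1), M (P - x (m+1))⟫
      ⟪U, M U⟫ ⟪V, M V⟫
      ⟪x (m+1) - xs, M (P - x (m+1))⟫ ⟪x (m+1) - xs, M U⟫ ⟪x (m+1) - xs, M V⟫
      ⟪P - x (m+1), M U⟫ ⟪P - x (m+1), M V⟫ ⟪U, M V⟫ hd1' hd2']
  have h2lS : 0 ≤ 2*l*(⟪M Z - M P, P - xs⟫ + (g*β/4) * ⟪P - Y, M (P - Y)⟫) :=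
    mul_nonneg (by linarith) hS
  rw [mn, mn] at Hdev ⊢
  linarith [iden, Hdev, h2lS]
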